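/- Let a and b be distinct positive real numbers. Then A_{2/3}(a,b) < (3/(2√2)) · He(a,b), where A_{2/3} is the power mean of order 2/3 and He is the Heronian mean. -/

import Mathlib

theorem power_mean_two_thirds_lt (a b : ℝ) (ha : 0 < a) (hb : 0 < b) (hab : a ≠ b) :
    ((a ^ (2 / 3 : ℝ) + b ^ (2 / 3 : ℝ)) / 2) ^ (3 / 2 : ℝ) <
      (3 / (2 * Real.sqrt 2)) * ((a + b + Real.sqrt (a * b)) / 3) := by
  set x := a ^ (1/6 : ℝ) with hxdef
  set y := b ^ (1/6 : ℝ) with hydef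
  have hx : 0 < x := Real.rpow_pos_of_pos ha _
  have hy : 0 < y := Real.rpow_pos_of_pos hb _
  have hax : a ^ (2/3 : ℝ) = x ^ 4 := by
    rw [hxdef, ← Real.rpow_natCast (a ^ ((1:ℝ)/6)) 4, ← Real.rpow_mul ha.le]
    norm_num
  have hbx : b ^ (2/3 : ℝ) = y ^ 4 := by
    rw [hydef, ← Real.rpow_natCast (b ^ ((1:ℝ)/6)) 4, ← Real.rpow_mul hb.le]
    norm_num
  have ha6 : a = x ^ 6 := by
    rw [hxdef, ← Real.rpow_natCast (a ^ ((1:ℝ)/6)) 6, ← Real.rpow_mul ha.le]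
    norm_num
  have hb6 : b = y ^ 6 := by
    rw [hydef, ← Real.rpow_natCast (b ^ ((1:ℝ)/6)) 6, ← Real.rpow_mul hb.le]
    norm_num
  have hsa : Real.sqrt a = x ^ 3 := by
    rw [Real.sqrt_eq_rpow, hxdef, ← Real.rpow_natCast (a ^ ((1:ℝ)/6)) 3,
      ← Real.rpow_mul ha.le]
    norm_num
  have hsb : Real.sqrt b = y ^ 3 := by
    rw [Real.sqrt_eq_rpow, hydef, ← Real.rpow_natCast (b ^ ((1:ℝ)/6)) 3,
      ← Real.rpow_mul hb.le]
    norm_num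
  have hsab : Real.sqrt (a * b) = x ^ 3 * y ^ 3 := by
    rw [Real.sqrt_mul ha.le, hsa, hsb]
  set A : ℝ := (x ^ 4 + y ^ 4) / 2 with hAdef
  have hA : 0 ≤ A := by positivity
  have hL : A ^ (3/2 : ℝ) = Real.sqrt (A ^ 3) := by
    rw [Real.sqrt_eq_rpow, ← Real.rpow_natCast A 3, ← Real.rpow_mul hA]
    norm_num
  set s : ℝ := Real.sqrt 2 with hsdef
  have hs0 : 0 < s := Real.sqrt_pos.mpr (by norm_num)
  have hs2 : s ^ 2 = 2 := Real.sq_sqrt (by norm_num)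
  set T : ℝ := x ^ 6 + y ^ 6 + x ^ 3 * y ^ 3 with hTdef
  have hT : 0 < T := by positivity
  have hR : (0:ℝ) < 3 / (2 * s) * (T / 3) := by positivity
  have hcore : (x ^ 4 + y ^ 4) ^ 3 < T ^ 2 := by
    have hQ : 0 ≤ 2*(x^2+y^2)^2 + (x^2+y^2)*x*y - 4*x^2*y^2 := by
      nlinarith [sq_nonneg (x-y), sq_nonneg (x+y), sq_nonneg (x*y), mul_pos hx hy]
    have hxy : 0 < x^3*y^3 := by positivity
    rw [hTdef]
    nlinarith [mul_nonneg (mul_nonneg (sq_nonneg (x-y)) hQ) hxy.le, mul_pos hxy hxy]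
  have hR2 : (3 / (2 * s) * (T / 3)) ^ 2 = T ^ 2 / 8 := by
    have h1 : 3 / (2 * s) * (T / 3) = T / (2 * s) := by
      field_simp
    rw [h1, div_pow, mul_pow, hs2]
    norm_num
  rw [hax, hbx, hsab, ha6, hb6, ← hAdef, ← hTdef, hL]
  rw [Real.sqrt_lt' hR]
  rw [hR2, hAdef]
  have h8 : ((x ^ 4 + y ^ 4) / 2) ^ 3 = (x ^ 4 + y ^ 4) ^ 3 / 8 := by ring
  rw [h8]
  clear_value x y A s T
  linarith
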